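/- Let (A, δ) be a commutative differential ring, (B, ∂) a differential ring with B a ℚ-algebra, and φ : A → B a ring homomorphism. Define T*_φ : A → B[[t]] by T*_φ(a) = Σ_α b_α t^α where b_α = (1/α!) Σ_{β≤α} (−1)^{α−β} (α choose β) ∂^{α−β}(φ(δ^β(a))). Then T*_φ is a differential ring homomorphism from (A, δ) to (B[[t]], ∂ + d/dt), where ∂ acts coefficientwise on B[[t]]. -/

import Mathlib

/-- The coefficientwise extension of a map `d : B → B` to `B[[t]]`. -/
noncomputable def coeffwiseDer {B : Type*} [CommRing B] (d : B → B) :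
    PowerSeries B → PowerSeries B :=
  fun f => PowerSeries.mk fun n => d (PowerSeries.coeff n f)

/-- The twisted Taylor morphism `T*_φ(a) = Σ_α b_α t^α` with
`b_α = (1/α!) Σ_{β≤α} (−1)^{α−β} (α choose β) ∂^{α−β}(φ(δ^β(a)))`. -/
noncomputable def twistedTaylor {A B : Type*} [CommRing A] [CommRing B] [Algebra ℚ B]
    (δ : A → A) (d : B → B) (φ : A →+* B) : A → PowerSeries B :=
  fun a => PowerSeries.mk fun α => (α.factorial : ℚ)⁻¹ •
    ∑ β ∈ Finset.range (α + 1),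
      ((-1 : B) ^ (α - β) * (α.choose β : B)) * d^[α - β] (φ (δ^[β] a))

namespace TTaux

open Finset PowerSeries

/-! ### Iterates of derivations -/

section Iter
variable {R : Type*} [CommRing R]

lemma iter_zero (D : Derivation ℤ R R) (n : ℕ) : D^[n] 0 = 0 := by
  induction n with
  | zero => rfl
  | succ n ih => rw [Function.iterate_succ_apply, map_zero, ih]

lemma iter_add (D : Derivation ℤ R R) (n : ℕ) (x y : R) :
    D^[n] (x + y) = D^[n] x + D^[n] y := by
  induction n generalizing x y with
  | zero => rfl
  | succ n ih => rw [Function.iterate_succ_apply, map_add, ih,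
      Function.iterate_succ_apply, Function.iterate_succ_apply]

lemma iter_nsmul (D : Derivation ℤ R R) (n m : ℕ) (x : R) :
    D^[n] (m • x) = m • D^[n] x := by
  induction n generalizing x with
  | zero => rfl
  | succ n ih => rw [Function.iterate_succ_apply, map_nsmul, ih,
      Function.iterate_succ_apply]

lemma iter_sum (D : Derivation ℤ R R) (n : ℕ) {ι : Type*} (s : Finset ι) (f : ι → R) :
    D^[n] (∑ i ∈ s, f i) = ∑ i ∈ s, D^[n] (f i) := by
  classical
  induction s using Finset.cons_induction with
  | empty => simp [iter_zero]
  | cons a s ha ih => rw [Finset.sum_cons, iter_add, ih, Finset.sum_cons]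

lemma iter_one_succ (D : Derivation ℤ R R) (n : ℕ) : D^[n + 1] (1 : R) = 0 := by
  rw [Function.iterate_succ_apply, Derivation.map_one_eq_zero, iter_zero]

lemma iter_leibniz (D : Derivation ℤ R R) (a b : R) (n : ℕ) :
    D^[n] (a * b) = ∑ p ∈ antidiagonal n, (n.choose p.1) • (D^[p.1] a * D^[p.2] b) := by
  induction n with
  | zero => simp
  | succ n ih =>
      have key : (fun p : ℕ × ℕ => (n.choose p.1) • (D^[p.1] a * D^[p.2] b)) (0, n+1)
            + ∑ p ∈ antidiagonal n, (n.choose (p.1+1)) • (D^[p.1+1] a * D^[p.2] b)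
          = ∑ p ∈ antidiagonal n, (n.choose p.1) • (D^[p.1] a * D^[p.2+1] b) := by
        rw [← Finset.Nat.sum_antidiagonal_succ
          (f := fun p : ℕ × ℕ => (n.choose p.1) • (D^[p.1] a * D^[p.2] b)),
          Finset.Nat.sum_antidiagonal_succ'
          (f := fun p : ℕ × ℕ => (n.choose p.1) • (D^[p.1] a * D^[p.2] b))]
        simp [Nat.choose_succ_self]
      rw [Function.iterate_succ_apply', ih, map_sum]
      have step : ∀ p : ℕ × ℕ, D ((n.choose p.1) • (D^[p.1] a * D^[p.2] b))
          = (n.choose p.1) • (D^[p.1+1] a * D^[p.2] b)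
            + (n.choose p.1) • (D^[p.1] a * D^[p.2+1] b) := by
        intro p
        rw [map_nsmul, Derivation.leibniz, smul_eq_mul, smul_eq_mul, smul_add,
          Function.iterate_succ_apply', Function.iterate_succ_apply']
        ring_nf
      calc ∑ p ∈ antidiagonal n, D ((n.choose p.1) • (D^[p.1] a * D^[p.2] b))
          = ∑ p ∈ antidiagonal n, ((n.choose p.1) • (D^[p.1+1] a * D^[p.2] b)
              + (n.choose p.1) • (D^[p.1] a * D^[p.2+1] b)) := by
            exact Finset.sum_congr rfl fun p _ => step p
        _ = ∑ p ∈ antidiagonal (n+1), ((n+1).choose p.1) • (D^[p.1] a * D^[p.2] b) := by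
            rw [Finset.sum_add_distrib, ← key, Finset.Nat.sum_antidiagonal_succ
              (f := fun p : ℕ × ℕ => ((n+1).choose p.1) • (D^[p.1] a * D^[p.2] b))]
            simp only [Nat.choose_succ_succ', add_smul, Nat.choose_zero_right, one_smul,
              Function.iterate_zero, id_eq, Nat.choose_self]
            rw [Finset.sum_add_distrib]
            abel

end Iter

/-! ### Sum reshuffling -/

section Sums
variable {M : Type*} [AddCommMonoid M]

/-- The set of quadruples with total sum `α`. -/
def S4 (α : ℕ) : Finset ((ℕ × ℕ) × (ℕ × ℕ)) :=
  ((range (α+1) ×ˢ range (α+1)) ×ˢ (range (α+1) ×ˢ range (α+1))).filter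
    fun x => x.1.1 + x.1.2 + x.2.1 + x.2.2 = α

lemma mem_S4 {α : ℕ} {x : (ℕ × ℕ) × (ℕ × ℕ)} :
    x ∈ S4 α ↔ x.1.1 + x.1.2 + x.2.1 + x.2.2 = α := by
  simp only [S4, mem_filter, mem_product, mem_range]
  omega

lemma groupSum (α : ℕ) (G : ℕ × ℕ → ℕ × ℕ → M) :
    ∑ p ∈ antidiagonal α, ∑ q ∈ antidiagonal p.1, ∑ r ∈ antidiagonal p.2, G q r
      = ∑ x ∈ S4 α, G x.1 x.2 := by
  rw [← Finset.sum_fiberwise_of_maps_to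
    (g := fun x : (ℕ × ℕ) × (ℕ × ℕ) => (x.1.1 + x.1.2, x.2.1 + x.2.2))
    (t := antidiagonal α)
    (fun x hx => by rw [mem_S4] at hx; rw [Finset.HasAntidiagonal.mem_antidiagonal]; dsimp only; omega)]
  refine Finset.sum_congr rfl fun p hp => ?_
  rw [Finset.HasAntidiagonal.mem_antidiagonal] at hp
  have hset : (S4 α).filter
      (fun x : (ℕ × ℕ) × (ℕ × ℕ) => (x.1.1 + x.1.2, x.2.1 + x.2.2) = p)
      = antidiagonal p.1 ×ˢ antidiagonal p.2 := by
    ext x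
    simp only [mem_filter, mem_S4, mem_product, Finset.HasAntidiagonal.mem_antidiagonal, Prod.ext_iff]
    omega
  rw [hset, Finset.sum_product]

lemma sum4 (α : ℕ) (G : ℕ × ℕ → ℕ × ℕ → M) :
    ∑ p ∈ antidiagonal α, ∑ q ∈ antidiagonal p.1, ∑ r ∈ antidiagonal p.2,
        G (q.1, r.1) (q.2, r.2)
      = ∑ p ∈ antidiagonal α, ∑ q ∈ antidiagonal p.1, ∑ r ∈ antidiagonal p.2, G q r := by
  rw [groupSum α (fun q r => G (q.1, r.1) (q.2, r.2)), groupSum α G]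
  refine Finset.sum_nbij' (fun x => ((x.1.1, x.2.1), (x.1.2, x.2.2)))
    (fun x => ((x.1.1, x.2.1), (x.1.2, x.2.2))) ?_ ?_ ?_ ?_ ?_ <;>
    intro x hx <;> simp only [mem_S4] at * <;> omega

end Sums

/-! ### The coefficient formula -/

/-- scalar weight -/
def s (p : ℕ × ℕ) : ℚ := (-1) ^ p.1 * ((p.1.factorial : ℚ) * p.2.factorial)⁻¹

lemma fac_ne (n : ℕ) : (n.factorial : ℚ) ≠ 0 :=
  Nat.cast_ne_zero.2 n.factorial_ne_zero

variable {A B : Type*} [CommRing A] [CommRing B] [Algebra ℚ B]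

lemma algebraMap_mul_eq_smul (q : ℚ) (z : B) : algebraMap ℚ B q * z = q • z :=
  (Algebra.smul_def q z).symm

lemma coeff_tT (δ : A → A) (d : B → B) (φ : A →+* B) (a : A) (α : ℕ) :
    PowerSeries.coeff α (twistedTaylor δ d φ a)
      = ∑ p ∈ antidiagonal α, s p • d^[p.1] (φ (δ^[p.2] a)) := by
  rw [twistedTaylor, PowerSeries.coeff_mk, Finset.smul_sum,
    Finset.Nat.sum_antidiagonal_eq_sum_range_succ
      (f := fun i j => s (i, j) • d^[i] (φ (δ^[j] a))),
    ← Finset.sum_range_reflect]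
  refine Finset.sum_congr rfl fun β hβ => ?_
  rw [Finset.mem_range] at hβ
  have hβ' : β ≤ α := by omega
  have h1 : α + 1 - 1 - β = α - β := by omega
  have h2 : α - (α - β) = β := by omega
  rw [h1, h2]
  have hcast : ((-1 : B) ^ β * ((α.choose (α - β) : ℕ) : B))
      = algebraMap ℚ B ((-1) ^ β * (α.choose (α - β) : ℚ)) := by
    rw [map_mul, map_pow, map_neg, map_one, map_natCast]
  rw [hcast, algebraMap_mul_eq_smul, smul_smul]
  congr 1
  simp only [s]
  rw [Nat.cast_choose ℚ (Nat.sub_le α β), h2]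
  have := fac_ne α; have := fac_ne β; have := fac_ne (α - β)
  field_simp

/-! ### Scalar identities -/

lemma scal_mul {p q r : ℕ × ℕ} (hq : q.1 + q.2 = p.1) (hr : r.1 + r.2 = p.2) :
    s p * ((p.2.choose r.1 : ℚ) * (p.1.choose q.1 : ℚ))
      = s (q.1, r.1) * s (q.2, r.2) := by
  simp only [s]
  rw [← hq, ← hr, Nat.cast_add_choose, Nat.cast_add_choose, pow_add]
  have := fac_ne q.1; have := fac_ne q.2; have := fac_ne r.1; have := fac_ne r.2
  have := fac_ne (q.1 + q.2); have := fac_ne (r.1 + r.2)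
  field_simp

lemma scal_succ (p : ℕ × ℕ) : ((p.2 + 1 : ℕ) : ℚ) * s (p.1, p.2 + 1) = s p := by
  simp only [s, Nat.factorial_succ]
  have := fac_ne p.1; have := fac_ne p.2
  push_cast
  field_simp

lemma scal_der {α : ℕ} {p : ℕ × ℕ} (hp : p.1 + p.2 = α) :
    ((p.2 : ℕ) : ℚ) * s (p.1 + 1, p.2) = s p + ((α : ℚ) + 1) * s (p.1 + 1, p.2) := by
  have hα : (α : ℚ) = (p.1 : ℚ) + (p.2 : ℚ) := by exact_mod_cast hp.symm
  simp only [s, Nat.factorial_succ, pow_succ, hα]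
  have := fac_ne p.1; have := fac_ne p.2
  field_simp
  push_cast
  ring

end TTaux

open Finset PowerSeries TTaux in
/-- The twisted Taylor morphism is a differential ring homomorphism
`(A, δ) → (B[[t]], ∂ + d/dt)`. -/
theorem twistedTaylor_is_differential_ring_hom {A B : Type*} [CommRing A] [CommRing B]
    [Algebra ℚ B] (δ : Derivation ℤ A A) (d : Derivation ℤ B B) (φ : A →+* B) :
    (∀ a b : A, twistedTaylor (⇑δ) (⇑d) φ (a + b) =
        twistedTaylor (⇑δ) (⇑d) φ a + twistedTaylor (⇑δ) (⇑d) φ b) ∧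
    (∀ a b : A, twistedTaylor (⇑δ) (⇑d) φ (a * b) =
        twistedTaylor (⇑δ) (⇑d) φ a * twistedTaylor (⇑δ) (⇑d) φ b) ∧
    (twistedTaylor (⇑δ) (⇑d) φ 1 = 1) ∧
    (∀ a : A, twistedTaylor (⇑δ) (⇑d) φ (δ a) =
        coeffwiseDer (⇑d) (twistedTaylor (⇑δ) (⇑d) φ a) +
          PowerSeries.derivativeFun (twistedTaylor (⇑δ) (⇑d) φ a)) := by
  refine ⟨?_, ?_, ?_, ?_⟩
  · -- additivity
    intro a b
    ext α
    rw [map_add, coeff_tT, coeff_tT, coeff_tT, ← Finset.sum_add_distrib]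
    refine Finset.sum_congr rfl fun p _ => ?_
    rw [iter_add δ, map_add, iter_add d, smul_add]
  · -- multiplicativity
    intro a b
    ext α
    rw [PowerSeries.coeff_mul, coeff_tT]
    simp only [coeff_tT]
    rw [show (∑ p ∈ antidiagonal α,
        (∑ q ∈ antidiagonal p.1, s q • (⇑d)^[q.1] (φ ((⇑δ)^[q.2] a))) *
        (∑ r ∈ antidiagonal p.2, s r • (⇑d)^[r.1] (φ ((⇑δ)^[r.2] b))))
      = ∑ p ∈ antidiagonal α, ∑ q ∈ antidiagonal p.1, ∑ r ∈ antidiagonal p.2,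
          (s q • (⇑d)^[q.1] (φ ((⇑δ)^[q.2] a))) * (s r • (⇑d)^[r.1] (φ ((⇑δ)^[r.2] b)))
      from Finset.sum_congr rfl fun p _ => Finset.sum_mul_sum _ _ _ _]
    rw [← sum4 α (fun q r => (s q • (⇑d)^[q.1] (φ ((⇑δ)^[q.2] a))) *
          (s r • (⇑d)^[r.1] (φ ((⇑δ)^[r.2] b))))]
    refine Finset.sum_congr rfl fun p _ => ?_
    rw [iter_leibniz δ, map_sum, iter_sum d, Finset.smul_sum, Finset.sum_comm]
    refine Finset.sum_congr rfl fun q hq => ?_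
    rw [Finset.HasAntidiagonal.mem_antidiagonal] at hq
    rw [map_nsmul, map_mul, iter_nsmul, iter_leibniz d, Finset.smul_sum, Finset.smul_sum]
    refine Finset.sum_congr rfl fun x hx => ?_
    rw [Finset.HasAntidiagonal.mem_antidiagonal] at hx
    rw [smul_mul_smul_comm]
    simp only [← Nat.cast_smul_eq_nsmul ℚ]
    rw [smul_smul, smul_smul, mul_assoc, scal_mul hx hq]
  · -- maps 1 to 1
    ext α
    rw [coeff_tT]
    cases α with
    | zero =>
        simp [s, PowerSeries.coeff_zero_eq_constantCoeff]
    | succ n =>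
        rw [Finset.sum_eq_zero, PowerSeries.coeff_one, if_neg (Nat.succ_ne_zero n)]
        intro p hp
        rw [Finset.HasAntidiagonal.mem_antidiagonal] at hp
        rcases p with ⟨i, k⟩
        match k with
        | 0 =>
            have hi : i = n + 1 := by omega
            subst hi
            simp only [Function.iterate_zero, id_eq, map_one, iter_one_succ, smul_zero]
        | (m+1) =>
            simp only [iter_one_succ, map_zero, iter_zero, smul_zero]
  · -- twisted derivation property
    intro a
    ext α
    rw [map_add, coeff_tT]
    have hcw : (PowerSeries.coeff α) (coeffwiseDer (⇑d) (twistedTaylor (⇑δ) (⇑d) φ a))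
        = ∑ p ∈ antidiagonal α, s p • (⇑d)^[p.1 + 1] (φ ((⇑δ)^[p.2] a)) := by
      rw [coeffwiseDer, PowerSeries.coeff_mk, coeff_tT, map_sum]
      refine Finset.sum_congr rfl fun p _ => ?_
      rw [map_rat_smul, ← Function.iterate_succ_apply' d]
    have hdf : (PowerSeries.coeff α) (PowerSeries.derivativeFun (twistedTaylor (⇑δ) (⇑d) φ a))
        = ∑ p ∈ antidiagonal (α + 1), (((α : ℚ) + 1) * s p) • (⇑d)^[p.1] (φ ((⇑δ)^[p.2] a)) := by
      rw [show PowerSeries.derivativeFun (twistedTaylor (⇑δ) (⇑d) φ a)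
        = PowerSeries.derivative B (twistedTaylor (⇑δ) (⇑d) φ a) from rfl]
      rw [PowerSeries.coeff_derivativeFun, coeff_tT, Finset.sum_mul]
      refine Finset.sum_congr rfl fun p _ => ?_
      have hc : ((α : B) + 1) = algebraMap ℚ B ((α : ℚ) + 1) := by
        push_cast; ring
      rw [smul_mul_assoc, mul_comm, hc, algebraMap_mul_eq_smul, smul_smul, mul_comm (s p)]
    rw [hcw, hdf]
    have hL : ∑ p ∈ antidiagonal α, s p • (⇑d)^[p.1] (φ ((⇑δ)^[p.2] (δ a)))
        = ∑ p ∈ antidiagonal (α + 1),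
            (((p.2 : ℕ) : ℚ) * s p) • (⇑d)^[p.1] (φ ((⇑δ)^[p.2] a)) := by
      rw [Finset.Nat.sum_antidiagonal_succ'
        (f := fun p : ℕ × ℕ => (((p.2 : ℕ) : ℚ) * s p) • (⇑d)^[p.1] (φ ((⇑δ)^[p.2] a)))]
      simp only [Nat.cast_zero, zero_mul, zero_smul, zero_add]
      refine Finset.sum_congr rfl fun p _ => ?_
      rw [scal_succ, ← Function.iterate_succ_apply δ]
    rw [hL, Finset.Nat.sum_antidiagonal_succ
        (f := fun p : ℕ × ℕ => (((p.2 : ℕ) : ℚ) * s p) • (⇑d)^[p.1] (φ ((⇑δ)^[p.2] a))),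
      Finset.Nat.sum_antidiagonal_succ
        (f := fun p : ℕ × ℕ => (((α : ℚ) + 1) * s p) • (⇑d)^[p.1] (φ ((⇑δ)^[p.2] a)))]
    have hzero : (((α + 1 : ℕ) : ℚ) * s (0, α + 1)) = ((α : ℚ) + 1) * s (0, α + 1) := by
      push_cast; ring
    rw [hzero]
    dsimp only
    have hmain : ∑ p ∈ antidiagonal α,
          (((p.2 : ℕ) : ℚ) * s (p.1 + 1, p.2)) • (⇑d)^[p.1 + 1] (φ ((⇑δ)^[p.2] a))
        = ∑ p ∈ antidiagonal α, s p • (⇑d)^[p.1 + 1] (φ ((⇑δ)^[p.2] a))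
          + ∑ p ∈ antidiagonal α,
              (((α : ℚ) + 1) * s (p.1 + 1, p.2)) • (⇑d)^[p.1 + 1] (φ ((⇑δ)^[p.2] a)) := by
      rw [← Finset.sum_add_distrib]
      refine Finset.sum_congr rfl fun p hp => ?_
      rw [Finset.HasAntidiagonal.mem_antidiagonal] at hp
      rw [scal_der hp, add_smul]
    rw [hmain]
    abel
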